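/- Let L be a smooth function on a finite-order jet space of a fiber bundle with one dependent variable u and total derivatives D_I. Define the Euler–Lagrange derivative δL/δu := Σ_I (−1)^{|I|} D_I(∂L/∂u_I). If L = D_j(F) is a total derivative of some smooth function F on a finite-order jet space, then δL/δu = 0. -/

import Mathlib

open MvPolynomial

/-- Coordinates on the infinite jet space of a bundle with `n` independent
variables `xⁱ` and `m` dependent variables `u^α`: base variables `Sum.inl i`
and jet variables `Sum.inr (α, I)` = `u^α_I`, indexed by unordered
multiindices `I` (multisets in `Fin n`). -/
abbrev JetVar (n m : ℕ) := Sum (Fin n) (Fin m × Multiset (Fin n))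

/-- The `i`-th total derivative
`D_i = ∂/∂xⁱ + Σ_{α,I} u^α_{Ii} ∂/∂u^α_I` on jet-space functions
(modeled as polynomials in the jet coordinates). -/
noncomputable def totalDeriv (n m : ℕ) (i : Fin n)
    (F : MvPolynomial (JetVar n m) ℝ) : MvPolynomial (JetVar n m) ℝ :=
  pderiv (Sum.inl i) F +
    ∑ v ∈ F.vars,
      match v with
      | Sum.inl _ => 0
      | Sum.inr (α, I) => X (Sum.inr (α, i ::ₘ I)) * pderiv (Sum.inr (α, I)) F

/-- Iterated total derivative `D_I` over the entries of the multiindex `I`. -/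
noncomputable def totalDerivI (n m : ℕ) (I : Multiset (Fin n))
    (F : MvPolynomial (JetVar n m) ℝ) : MvPolynomial (JetVar n m) ℝ :=
  I.toList.foldr (totalDeriv n m) F

/-- The Euler–Lagrange derivative
`δF/δu^α = Σ_{|I| ≤ N} (−1)^{|I|} D_I (∂F/∂u^α_I)` truncated at order `N`
(the sum is finite, and stabilizes once `N` bounds the order of `F`). -/
noncomputable def elDeriv (n m N : ℕ) (α : Fin m)
    (F : MvPolynomial (JetVar n m) ℝ) : MvPolynomial (JetVar n m) ℝ :=
  ∑ k ∈ Finset.range (N + 1), ∑ I : Sym (Fin n) k,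
    (-1 : MvPolynomial (JetVar n m) ℝ) ^ k *
      totalDerivI n m I.toMultiset (pderiv (Sum.inr (α, I.toMultiset)) F)

namespace ELaux

theorem sum_vars_extend {σ : Type*} [DecidableEq σ] (g : σ → MvPolynomial σ ℝ)
    (F : MvPolynomial σ ℝ) {S : Finset σ} (hS : F.vars ⊆ S) :
    ∑ v ∈ F.vars, g v * pderiv v F = ∑ v ∈ S, g v * pderiv v F :=
  Finset.sum_subset hS fun _ _ hv => by
    rw [pderiv_eq_zero_of_notMem_vars hv, mul_zero]

theorem derivation_apply_eq_sum_vars {σ : Type*} [DecidableEq σ]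
    (D : Derivation ℝ (MvPolynomial σ ℝ) (MvPolynomial σ ℝ)) (F : MvPolynomial σ ℝ) :
    D F = ∑ v ∈ F.vars, D (X v) * pderiv v F := by
  induction F using MvPolynomial.induction_on with
  | C a => simp [vars_C]
  | add p q hp hq =>
      rw [map_add, hp, hq,
        sum_vars_extend _ p (Finset.subset_union_left.trans Finset.subset_union_left),
        sum_vars_extend _ q (Finset.subset_union_right.trans Finset.subset_union_left),
        sum_vars_extend _ (p + q)
          (Finset.subset_union_right : (p+q).vars ⊆ p.vars ∪ q.vars ∪ (p+q).vars),
        ← Finset.sum_add_distrib]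
      exact Finset.sum_congr rfl fun v _ => by rw [map_add, mul_add]
  | mul_X p i hp =>
      have hsub : (p * X i).vars ⊆ p.vars ∪ {i} := by
        refine (vars_mul p (X i)).trans ?_
        gcongr
        exact Finset.subset_of_eq vars_X
      rw [sum_vars_extend _ (p * X i) hsub, D.leibniz]
      simp only [smul_eq_mul]
      have h1 : ∀ v, D (X v) * pderiv v (p * X i)
          = X i * (D (X v) * pderiv v p) + (if v = i then p * D (X i) else 0) := by
        intro v
        rw [pderiv_mul]
        by_cases hvi : v = i
        · subst hvi; simp; ring
        · simp [pderiv_X_of_ne (Ne.symm hvi), hvi]; ring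
      rw [Finset.sum_congr rfl fun v _ => h1 v, Finset.sum_add_distrib,
        ← Finset.mul_sum, ← sum_vars_extend (fun v => D (X v)) p Finset.subset_union_left, ← hp,
        Finset.sum_ite_eq' (p.vars ∪ {i}) i (fun _ => p * D (X i))]
      have : i ∈ p.vars ∪ {i} := by simp
      rw [if_pos this]
      ring

end ELaux

namespace ELaux

variable {n m : ℕ}

/-- The image of the variables under the total derivative. -/
noncomputable def dImg (n m : ℕ) (i : Fin n) : JetVar n m → MvPolynomial (JetVar n m) ℝ
  | Sum.inl k => if i = k then 1 else 0
  | Sum.inr (α, I) => X (Sum.inr (α, i ::ₘ I))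

/-- The total derivative as a mathlib `Derivation`. -/
noncomputable def Dt (n m : ℕ) (i : Fin n) :
    Derivation ℝ (MvPolynomial (JetVar n m) ℝ) (MvPolynomial (JetVar n m) ℝ) :=
  mkDerivation ℝ (dImg n m i)

theorem Dt_X (i : Fin n) (v : JetVar n m) : Dt n m i (X v) = dImg n m i v :=
  mkDerivation_X _ _ _

theorem totalDeriv_eq (i : Fin n) (F : MvPolynomial (JetVar n m) ℝ) :
    totalDeriv n m i F = Dt n m i F := by
  unfold totalDeriv
  rw [derivation_apply_eq_sum_vars (Dt n m i) F]
  have h1 : ∀ v : JetVar n m, Dt n m i (X v) * pderiv v F =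
      (match v with
      | Sum.inl _ => 0
      | Sum.inr (α, I) => X (Sum.inr (α, i ::ₘ I)) * pderiv (Sum.inr (α, I)) F)
      + (if v = Sum.inl i then pderiv v F else 0) := by
    rintro (k | ⟨α, I⟩)
    · by_cases hk : k = i
      · subst hk; simp [Dt_X, dImg]
      · simp [Dt_X, dImg, hk, Ne.symm hk]
    · simp [Dt_X, dImg]
  rw [Finset.sum_congr rfl fun v _ => h1 v, Finset.sum_add_distrib,
    Finset.sum_ite_eq' F.vars (Sum.inl i) (fun v => pderiv v F)]
  by_cases hmem : (Sum.inl i : JetVar n m) ∈ F.vars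
  · rw [if_pos hmem, add_comm]
  · rw [if_neg hmem, pderiv_eq_zero_of_notMem_vars hmem, zero_add, add_zero]

theorem Dt_comm (i k : Fin n) (F : MvPolynomial (JetVar n m) ℝ) :
    Dt n m i (Dt n m k F) = Dt n m k (Dt n m i F) := by
  have h : ⁅Dt n m i, Dt n m k⁆ = (0 : Derivation ℝ (MvPolynomial (JetVar n m) ℝ) _) := by
    apply derivation_ext
    rintro (t | ⟨α, I⟩)
    · simp only [Derivation.commutator_apply, Dt_X, dImg, Derivation.map_zero, Derivation.coe_zero,
        Pi.zero_apply]
      split <;> split <;> simp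
    · simp only [Derivation.commutator_apply, Dt_X, dImg, Derivation.coe_zero, Pi.zero_apply]
      rw [Multiset.cons_swap i k I]
      exact sub_self _
  have h' := congrArg (fun (D : Derivation ℝ (MvPolynomial (JetVar n m) ℝ)
      (MvPolynomial (JetVar n m) ℝ)) => D F) h
  simpa [Derivation.commutator_apply, sub_eq_zero] using h'

theorem pderiv_Dt (i : Fin n) (α : Fin m) (I : Multiset (Fin n))
    (F : MvPolynomial (JetVar n m) ℝ) :
    pderiv (Sum.inr (α, I)) (Dt n m i F) =
      Dt n m i (pderiv (Sum.inr (α, I)) F) +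
        (if i ∈ I then pderiv (Sum.inr (α, I.erase i)) F else 0) := by
  have h : ⁅(pderiv (Sum.inr (α, I)) :
        Derivation ℝ (MvPolynomial (JetVar n m) ℝ) (MvPolynomial (JetVar n m) ℝ)), Dt n m i⁆
      = (if i ∈ I then (pderiv (Sum.inr (α, I.erase i)) :
        Derivation ℝ (MvPolynomial (JetVar n m) ℝ) (MvPolynomial (JetVar n m) ℝ)) else 0) := by
    apply derivation_ext
    rintro (t | ⟨β, J⟩)
    · simp only [Derivation.commutator_apply, Dt_X, dImg]
      have h2 : pderiv (Sum.inr (α, I))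
          ((if i = t then 1 else 0) : MvPolynomial (JetVar n m) ℝ) = 0 := by
        split <;> simp
      have h3 : pderiv (Sum.inr (α, I)) (X (Sum.inl t) : MvPolynomial (JetVar n m) ℝ) = 0 :=
        pderiv_X_of_ne (by simp)
      rw [h2, h3, map_zero, sub_zero]
      split <;> simp [pderiv_X_of_ne]
    · simp only [Derivation.commutator_apply, Dt_X, dImg]
      have h3 : Dt n m i (pderiv (Sum.inr (α, I)) (X (Sum.inr (β, J)) :
          MvPolynomial (JetVar n m) ℝ)) = 0 := by
        by_cases hbj : (Sum.inr (β, J) : JetVar n m) = Sum.inr (α, I)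
        · rw [hbj, pderiv_X_self]
          exact Derivation.map_one_eq_zero _
        · rw [pderiv_X_of_ne hbj, map_zero]
      rw [h3, sub_zero]
      by_cases hc : β = α ∧ i ::ₘ J = I
      · obtain ⟨hb, hJ⟩ := hc
        subst hb; subst hJ
        rw [pderiv_X_self]
        have hiI : i ∈ i ::ₘ J := Multiset.mem_cons_self i J
        rw [if_pos hiI]
        simp [Multiset.erase_cons_head]
      · have hne : (Sum.inr (β, i ::ₘ J) : JetVar n m) ≠ Sum.inr (α, I) := by
          intro hw
          apply hc
          injection hw with hw'
          exact ⟨congrArg Prod.fst hw', congrArg Prod.snd hw'⟩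
        rw [pderiv_X_of_ne hne]
        split
        · rename_i hiI
          have hne2 : (Sum.inr (β, J) : JetVar n m) ≠ Sum.inr (α, I.erase i) := by
            intro hw
            injection hw with hw'
            apply hc
            refine ⟨congrArg Prod.fst hw', ?_⟩
            have := congrArg Prod.snd hw'
            simp only at this
            rw [this, Multiset.cons_erase hiI]
          simp [pderiv_X_of_ne hne2]
        · simp
  have h' : pderiv (Sum.inr (α, I)) (Dt n m i F) - Dt n m i (pderiv (Sum.inr (α, I)) F)
      = (if i ∈ I then pderiv (Sum.inr (α, I.erase i)) F else 0) := by
    have h2 := congrArg (fun (D : Derivation ℝ (MvPolynomial (JetVar n m) ℝ)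
        (MvPolynomial (JetVar n m) ℝ)) => D F) h
    simpa [Derivation.commutator_apply,
      apply_ite (fun (D : Derivation ℝ (MvPolynomial (JetVar n m) ℝ)
        (MvPolynomial (JetVar n m) ℝ)) => D F)] using h2
  rw [sub_eq_iff_eq_add] at h'
  rw [h', add_comm]

end ELaux

namespace ELaux

instance instLC (n m : ℕ) : LeftCommutative (totalDeriv n m) :=
  ⟨fun a b c => by simp only [totalDeriv_eq]; exact Dt_comm a b c⟩

theorem totalDerivI_zero (F : MvPolynomial (JetVar n m) ℝ) :
    totalDerivI n m 0 F = F := by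
  simp [totalDerivI]

theorem totalDerivI_cons (i : Fin n) (I : Multiset (Fin n)) (F : MvPolynomial (JetVar n m) ℝ) :
    totalDerivI n m (i ::ₘ I) F = totalDeriv n m i (totalDerivI n m I F) := by
  unfold totalDerivI
  have hperm : List.Perm ((i ::ₘ I).toList) (i :: I.toList) := by
    rw [← Multiset.coe_eq_coe, Multiset.coe_toList, ← Multiset.cons_coe, Multiset.coe_toList]
  rw [hperm.foldr_eq]
  rfl

theorem totalDerivI_add (I : Multiset (Fin n)) (x y : MvPolynomial (JetVar n m) ℝ) :
    totalDerivI n m I (x + y) = totalDerivI n m I x + totalDerivI n m I y := by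
  induction I using Multiset.induction with
  | empty => simp [totalDerivI_zero]
  | cons a I ih =>
      rw [totalDerivI_cons, totalDerivI_cons, totalDerivI_cons, ih, totalDeriv_eq,
        totalDeriv_eq, totalDeriv_eq, map_add]

theorem totalDerivI_zero_poly (I : Multiset (Fin n)) :
    totalDerivI n m I (0 : MvPolynomial (JetVar n m) ℝ) = 0 := by
  induction I using Multiset.induction with
  | empty => simp [totalDerivI_zero]
  | cons a I ih =>
      rw [totalDerivI_cons, ih, totalDeriv_eq, map_zero]

theorem totalDerivI_totalDeriv (j : Fin n) (I : Multiset (Fin n))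
    (F : MvPolynomial (JetVar n m) ℝ) :
    totalDerivI n m I (totalDeriv n m j F) = totalDerivI n m (j ::ₘ I) F := by
  induction I using Multiset.induction with
  | empty => rw [totalDerivI_zero, totalDerivI_cons, totalDerivI_zero]
  | cons a I ih =>
      rw [totalDerivI_cons, ih, Multiset.cons_swap j a, totalDerivI_cons a (j ::ₘ I) F]

end ELaux

open ELaux

/-- (One dependent variable `u`, i.e. `m = 1`.)  If a
Lagrangian `L = D_j(F)` is a total derivative of a jet-space function `F`,
then its Euler–Lagrange derivative vanishes:
`δL/δu = Σ_I (−1)^{|I|} D_I(∂L/∂u_I) = 0` (the truncated sums are zero for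
every sufficiently large truncation order `N`). -/
theorem elDeriv_totalDeriv_eq_zero (n : ℕ) (j : Fin n)
    (F : MvPolynomial (JetVar n 1) ℝ) :
    ∃ N₀ : ℕ, ∀ N ≥ N₀, elDeriv n 1 N 0 (totalDeriv n 1 j F) = 0 := by

  classical
  refine ⟨(F.vars.sup fun v => Sum.elim (fun _ => 0) (fun p => Multiset.card p.2) v) + 1,
    fun N hN => ?_⟩
  -- the two families of terms
  set A : ℕ → MvPolynomial (JetVar n 1) ℝ := fun k =>
    ∑ I : Sym (Fin n) k,
      totalDerivI n 1 (j ::ₘ I.toMultiset) (pderiv (Sum.inr (0, I.toMultiset)) F) with hA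
  set B : ℕ → MvPolynomial (JetVar n 1) ℝ := fun k =>
    ∑ I : Sym (Fin n) k,
      if j ∈ I.toMultiset then
        totalDerivI n 1 I.toMultiset (pderiv (Sum.inr (0, I.toMultiset.erase j)) F)
      else 0 with hB
  -- rewrite each term of the EL derivative
  have hterm : ∀ (k : ℕ) (I : Sym (Fin n) k),
      totalDerivI n 1 I.toMultiset (pderiv (Sum.inr (0, I.toMultiset)) (totalDeriv n 1 j F)) =
        totalDerivI n 1 (j ::ₘ I.toMultiset) (pderiv (Sum.inr (0, I.toMultiset)) F) +
          (if j ∈ I.toMultiset then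
            totalDerivI n 1 I.toMultiset (pderiv (Sum.inr (0, I.toMultiset.erase j)) F)
          else 0) := by
    intro k I
    rw [totalDeriv_eq, pderiv_Dt, totalDerivI_add]
    refine congrArg₂ (· + ·) ?_ ?_
    · rw [← totalDeriv_eq, totalDerivI_totalDeriv]
    · rw [apply_ite (totalDerivI n 1 I.toMultiset), totalDerivI_zero_poly]
  have hmain : elDeriv n 1 N 0 (totalDeriv n 1 j F) =
      ∑ k ∈ Finset.range (N + 1), ((-1) ^ k * A k + (-1) ^ k * B k) := by
    unfold elDeriv
    refine Finset.sum_congr rfl fun k _ => ?_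
    rw [hA, hB, Finset.mul_sum, Finset.mul_sum, ← Finset.sum_add_distrib]
    refine Finset.sum_congr rfl fun I _ => ?_
    rw [hterm k I, mul_add]
  -- B at successor indices equals A
  have hbij : ∀ k : ℕ,
      ∑ I ∈ Finset.univ.filter (fun I : Sym (Fin n) (k + 1) => j ∈ I.toMultiset),
        totalDerivI n 1 I.toMultiset (pderiv (Sum.inr (0, I.toMultiset.erase j)) F)
      = ∑ I : Sym (Fin n) k,
          totalDerivI n 1 (j ::ₘ I.toMultiset) (pderiv (Sum.inr (0, I.toMultiset)) F) := by
    intro k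
    refine Finset.sum_bij'
      (fun (I : Sym (Fin n) (k + 1)) hI =>
        I.erase j (Sym.mem_coe.mp (Finset.mem_filter.mp hI).2))
      (fun (I : Sym (Fin n) k) _ => j ::ₛ I)
      (fun I hI => Finset.mem_univ _)
      (fun I _ => Finset.mem_filter.mpr ⟨Finset.mem_univ _,
        by simp [Sym.coe_cons]⟩)
      (fun I hI => Sym.cons_erase _)
      (fun I _ => Sym.erase_cons_head _ _)
      ?_
    intro I hI
    have hj : j ∈ I.toMultiset := (Finset.mem_filter.mp hI).2
    rw [Sym.coe_erase, Multiset.cons_erase hj]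
  have hBA : ∀ k : ℕ, B (k + 1) = A k := by
    intro k
    simp only [hA, hB]
    rw [← Finset.sum_filter]
    exact hbij k
  have hB0 : B 0 = 0 := by
    simp only [hB]
    refine Finset.sum_eq_zero fun I _ => ?_
    have : I.toMultiset = 0 := Multiset.card_eq_zero.mp I.prop
    rw [if_neg (by simp [this])]
  have hAN : A N = 0 := by
    simp only [hA]
    refine Finset.sum_eq_zero fun I _ => ?_
    have hcard : Multiset.card I.toMultiset = N := I.prop
    have hnot : (Sum.inr (0, I.toMultiset) : JetVar n 1) ∉ F.vars := by
      intro hmem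
      have hle : Multiset.card I.toMultiset
          ≤ F.vars.sup fun v => Sum.elim (fun _ => 0) (fun p => Multiset.card p.2) v := by
        simpa using Finset.le_sup
          (f := fun v => Sum.elim (fun _ => 0) (fun p : Fin 1 × Multiset (Fin n) =>
            Multiset.card p.2) v) hmem
      omega
    rw [pderiv_eq_zero_of_notMem_vars hnot, totalDerivI_zero_poly]
  rw [hmain, Finset.sum_add_distrib, Finset.sum_range_succ, hAN, mul_zero, add_zero,
    Finset.sum_range_succ', hB0, mul_zero, add_zero]
  have : ∀ k ∈ Finset.range N, (-1 : MvPolynomial (JetVar n 1) ℝ) ^ (k + 1) * B (k + 1)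
      = -((-1) ^ k * A k) := by
    intro k _
    rw [hBA k, pow_succ]
    ring
  rw [Finset.sum_congr rfl this, Finset.sum_neg_distrib]
  exact add_neg_cancel _
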